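/- (Proposition 3) Let τ : (ℕ≥1 → ℂ) → ℂ be a nowhere-vanishing function such that the determinant formula of order m holds for every m ≥ 2, every x, all pairwise distinct α₁,…,α_m and pairwise distinct β₁,…,β_m with βᵢ ≠ αⱼ for all i,j. Then for every m ≥ 2, every x, all pairwise distinct α₁,…,α_{m+1} and all pairwise distinct β₁,…,β_{m−1} with βᵢ ≠ αⱼ for all i,j, the addition formula of order m holds at x. (This follows from the Plücker relations for the determinants appearing in the determinant formula.) -/

import Mathlib

open scoped BigOperators

noncomputable section

/-- Sequences `x = (x₁, x₂, …)` indexed by positive integers, with complex entries. -/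
abbrev TSeq : Type := {n : ℕ // 0 < n} → ℂ

/-- `[α]`, the sequence whose `n`-th entry is `αⁿ/n`. -/
noncomputable def ch (α : ℂ) : TSeq := fun n => α ^ (n : ℕ) / ((n : ℕ) : ℂ)

/-- The Vandermonde-type product `Δ(γ₁, …, γₙ) = ∏_{i<j} (γᵢ - γⱼ)`. -/
noncomputable def Vand {n : ℕ} (γ : Fin n → ℂ) : ℂ :=
  ∏ i, ∏ j ∈ Finset.Ioi i, (γ i - γ j)

/-- `ζ(x; γ₁, …, γₙ) = Δ(γ₁, …, γₙ) · τ(x + [γ₁] + ⋯ + [γₙ])`. -/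
noncomputable def zeta (τ : TSeq → ℂ) (x : TSeq) {n : ℕ} (γ : Fin n → ℂ) : ℂ :=
  Vand γ * τ (x + ∑ i, ch (γ i))

/-- The determinant formula of order `m` for the KP τ-function at `x`. -/
def KPDet (τ : TSeq → ℂ) (m : ℕ) (x : TSeq) (α β : Fin m → ℂ) : Prop :=
  τ (x + ∑ i, ch (β i) - ∑ i, ch (α i)) / τ x =
    (∏ i, ∏ j, (β i - α j)) /
      ((∏ i, ∏ j ∈ Finset.Ioi i, (α i - α j)) * (∏ i, ∏ j ∈ Finset.Ioi i, (β j - β i))) *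
    Matrix.det (Matrix.of fun i j : Fin m => τ (x + ch (β i) - ch (α j)) / ((β i - α j) * τ x))

/-- The addition formula of order `m` of the KP hierarchy:
`∑_{i=1}^{m+1} (−1)^{i−1} ζ(x; β₁,…,β_{m−1},αᵢ) ζ(x; α₁,…,α̂ᵢ,…,α_{m+1}) = 0`. -/
def KPAdd (τ : TSeq → ℂ) (m : ℕ) (x : TSeq) (α : Fin (m+1) → ℂ) (β : Fin (m-1) → ℂ) : Prop :=
  ∑ i : Fin (m+1), (-1 : ℂ) ^ (i : ℕ) * zeta τ x (Fin.snoc β (α i)) *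
    zeta τ x (fun j : Fin m => α (i.succAbove j)) = 0

lemma pluecker {n : ℕ} (B : Fin n → Fin (n+1) → ℂ) (v : Fin (n+2) → Fin (n+1) → ℂ) :
    ∑ i : Fin (n+2), (-1:ℂ)^(i:ℕ) * Matrix.det (Matrix.of (Fin.snoc B (v i))) *
      Matrix.det (Matrix.of (v ∘ i.succAbove)) = 0 := by
  set c : Fin (n+2) → ℂ := fun i => (-1:ℂ)^(i:ℕ) * Matrix.det (Matrix.of (v ∘ i.succAbove))
    with hc
  have key : ∀ k, ∑ i, c i * v i k = 0 := by
    intro k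
    have h0 : Matrix.det (Matrix.of fun i => Fin.cons (v i k) (v i) : Matrix (Fin (n+2)) (Fin (n+2)) ℂ) = 0 := by
      apply Matrix.det_zero_of_column_eq (i := 0) (j := Fin.succ k)
      · exact (Fin.succ_ne_zero k).symm
      · intro a; simp
    rw [Matrix.det_succ_column_zero] at h0
    rw [← h0]
    refine Finset.sum_congr rfl fun i _ => ?_
    have hsub : ((Matrix.of fun i => Fin.cons (v i k) (v i)).submatrix i.succAbove Fin.succ)
        = Matrix.of (v ∘ i.succAbove) := by
      ext a b; simp [Matrix.submatrix]
    rw [hsub]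
    simp [hc]; ring
  let M0 : Matrix (Fin (n+1)) (Fin (n+1)) ℂ := Matrix.of (Fin.snoc B 0)
  let L : (Fin (n+1) → ℂ) →ₗ[ℂ] ℂ :=
    { toFun := fun u => (M0.updateRow (Fin.last n) u).det
      map_add' := fun u w => Matrix.det_updateRow_add _ _ _ _
      map_smul' := fun s u => Matrix.det_updateRow_smul _ _ _ _ }
  have hD : ∀ u, Matrix.det (Matrix.of (Fin.snoc B u)) = L u := by
    intro u
    have : (Matrix.of (Fin.snoc B u)) = M0.updateRow (Fin.last n) u := by
      ext i j
      induction i using Fin.lastCases with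
      | last => simp [Matrix.updateRow_self]
      | cast i => simp [M0, Matrix.updateRow_ne (Fin.castSucc_lt_last i).ne]
    rw [this]; rfl
  have hsum : (∑ i, c i • v i) = 0 := by
    funext k
    simpa [Finset.sum_apply] using key k
  calc ∑ i : Fin (n+2), (-1:ℂ)^(i:ℕ) * Matrix.det (Matrix.of (Fin.snoc B (v i))) *
      Matrix.det (Matrix.of (v ∘ i.succAbove))
      = ∑ i, c i * L (v i) := by
        refine Finset.sum_congr rfl fun i _ => ?_
        rw [hD]; simp [hc]; ring
    _ = L (∑ i, c i • v i) := by rw [map_sum]; simp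
    _ = 0 := by rw [hsum, map_zero]

lemma exists_fresh (n : ℕ) (S : Finset ℂ) :
    ∃ μ : Fin n → ℂ, Function.Injective μ ∧ ∀ k, μ k ∉ S := by
  obtain ⟨t, ht⟩ := Infinite.exists_notMem_finset
    ((Finset.univ : Finset (Fin n)).biUnion fun k => S.image fun s => s - ((k : ℕ) : ℂ))
  refine ⟨fun k => t + ((k : ℕ) : ℂ), ?_, ?_⟩
  · intro a b hab
    have h1 : ((a : ℕ) : ℂ) = ((b : ℕ) : ℂ) := add_right_injective t hab
    exact Fin.ext (Nat.cast_injective h1)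
  · intro k hk
    exact ht (Finset.mem_biUnion.2 ⟨k, Finset.mem_univ _,
      Finset.mem_image.2 ⟨_, hk, by ring⟩⟩)

lemma snoc_inj {n : ℕ} {f : Fin n → ℂ} {a : ℂ} (hf : Function.Injective f)
    (ha : ∀ i, f i ≠ a) : Function.Injective (Fin.snoc f a : Fin (n+1) → ℂ) := by
  intro i j hij
  induction i using Fin.lastCases with
  | last =>
    induction j using Fin.lastCases with
    | last => rfl
    | cast j => simp only [Fin.snoc_last, Fin.snoc_castSucc] at hij
                exact absurd hij.symm (ha j)
  | cast i =>
    induction j using Fin.lastCases with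
    | last => simp only [Fin.snoc_last, Fin.snoc_castSucc] at hij
              exact absurd hij (ha i)
    | cast j => simp only [Fin.snoc_castSucc] at hij
                exact congrArg Fin.castSucc (hf hij)

lemma vand_ne_zero {n : ℕ} {γ : Fin n → ℂ} (h : Function.Injective γ) : Vand γ ≠ 0 := by
  unfold Vand
  refine Finset.prod_ne_zero_iff.2 fun i _ => Finset.prod_ne_zero_iff.2 fun j hj => ?_
  have hij : i ≠ j := ne_of_lt (Finset.mem_Ioi.1 hj)
  exact sub_ne_zero.2 fun hc => hij (h hc)

lemma rev_eq {n : ℕ} (γ : Fin n → ℂ) :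
    (∏ i, ∏ j ∈ Finset.Ioi i, (γ j - γ i)) =
      (∏ i : Fin n, ∏ _j ∈ Finset.Ioi i, (-1:ℂ)) * Vand γ := by
  unfold Vand
  rw [← Finset.prod_mul_distrib]
  refine Finset.prod_congr rfl fun i _ => ?_
  rw [← Finset.prod_mul_distrib]
  exact Finset.prod_congr rfl fun j _ => by ring

lemma sign_sq {n : ℕ} : (∏ i : Fin n, ∏ _j ∈ Finset.Ioi i, (-1:ℂ)) *
    (∏ i : Fin n, ∏ _j ∈ Finset.Ioi i, (-1:ℂ)) = 1 := by
  rw [← Finset.prod_mul_distrib]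
  refine Finset.prod_eq_one fun i _ => ?_
  rw [← Finset.prod_mul_distrib]
  exact Finset.prod_eq_one fun j _ => by ring

/-- Proposition 3: the determinant formulae (of all orders `m ≥ 2`) imply the
addition formulae of all orders `m ≥ 2`. -/
theorem KP_determinantFormula_implies_additionFormulae (τ : TSeq → ℂ) (hτ : ∀ x, τ x ≠ 0)
    (hdet : ∀ (m : ℕ), 2 ≤ m → ∀ (x : TSeq) (α β : Fin m → ℂ),
      Function.Injective α → Function.Injective β →
      (∀ i j, β i ≠ α j) → KPDet τ m x α β) :
    ∀ (m : ℕ), 2 ≤ m → ∀ (x : TSeq) (α : Fin (m+1) → ℂ) (β : Fin (m-1) → ℂ),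
      Function.Injective α → Function.Injective β →
      (∀ i j, β i ≠ α j) → KPAdd τ m x α β := by
  intro m hm x α β hα hβ hβα
  obtain ⟨n, rfl⟩ : ∃ n, m = n + 1 := ⟨m - 1, by omega⟩
  have hn : 1 ≤ n := by omega
  unfold KPAdd
  -- β : Fin (n + 1 - 1) → ℂ, defeq Fin n → ℂ
  have hβ' : Function.Injective (β : Fin n → ℂ) := hβ
  -- fresh parameters
  obtain ⟨μ, hμinj, hμS⟩ := exists_fresh (n+1)
    ((Finset.univ.image α) ∪ (Finset.univ.image (β : Fin n → ℂ)))
  have hμα : ∀ k i, α i ≠ μ k := by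
    intro k i h
    exact hμS k (Finset.mem_union_left _ (Finset.mem_image.2 ⟨i, Finset.mem_univ _, h⟩))
  have hμβ : ∀ k i, (β : Fin n → ℂ) i ≠ μ k := by
    intro k i h
    exact hμS k (Finset.mem_union_right _ (Finset.mem_image.2 ⟨i, Finset.mem_univ _, h⟩))
  set y : TSeq := x + ∑ k, ch (μ k) with hy
  set r : ℂ → Fin (n+1) → ℂ := fun b j => τ (y + ch b - ch (μ j)) / ((b - μ j) * τ y) with hr
  set s : ℂ := ∏ i : Fin (n+1), ∏ _j ∈ Finset.Ioi i, (-1:ℂ) with hs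
  have hVμ : Vand μ ≠ 0 := vand_ne_zero hμinj
  set C : ℂ := s * τ y / Vand μ with hC
  -- key computation
  have key : ∀ L : Fin (n+1) → ℂ, Function.Injective L → (∀ a j, L a ≠ μ j) →
      zeta τ x L = C * (∏ a, ∏ k, (L a - μ k)) *
        Matrix.det (Matrix.of fun a b => r (L a) b) := by
    intro L hL hLμ
    have hd := hdet (n+1) (by omega) y μ L hμinj hL hLμ
    unfold KPDet at hd
    have harg : y + ∑ a, ch (L a) - ∑ k, ch (μ k) = x + ∑ a, ch (L a) := by
      rw [hy]; abel
    rw [harg] at hd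
    have hτL : τ (x + ∑ a, ch (L a)) =
        ((∏ i, ∏ j, (L i - μ j)) /
          ((∏ i, ∏ j ∈ Finset.Ioi i, (μ i - μ j)) * (∏ i, ∏ j ∈ Finset.Ioi i, (L j - L i))) *
        Matrix.det (Matrix.of fun i j : Fin (n+1) =>
          τ (y + ch (L i) - ch (μ j)) / ((L i - μ j) * τ y))) * τ y :=
      (div_eq_iff (hτ y)).1 hd
    have hVL : Vand L ≠ 0 := vand_ne_zero hL
    have hss : s * s = 1 := sign_sq
    have hs0 : s ≠ 0 := left_ne_zero_of_mul_eq_one hss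
    have hVμ' : (∏ i, ∏ j ∈ Finset.Ioi i, (μ i - μ j)) = Vand μ := rfl
    have hrev : (∏ i, ∏ j ∈ Finset.Ioi i, (L j - L i)) = s * Vand L := rev_eq L
    have hmat : (Matrix.of fun i j : Fin (n+1) =>
        τ (y + ch (L i) - ch (μ j)) / ((L i - μ j) * τ y))
        = Matrix.of fun a b => r (L a) b := rfl
    rw [zeta, hτL, hVμ', hrev, hmat, hC]
    field_simp
    ring_nf
    linear_combination (-((∏ i, ∏ j, (L i - μ j)) *
      Matrix.det (Matrix.of fun a b => r (L a) b) * τ y)) * hss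
  -- the row vectors
  set B' : Fin n → Fin (n+1) → ℂ := fun a => r (β a) with hB'
  set v : Fin (n+2) → Fin (n+1) → ℂ := fun i => r (α i) with hv
  set Q : ℂ → ℂ := fun g => ∏ k, (g - μ k) with hQ
  set K : ℂ := C * C * (∏ a : Fin n, Q (β a)) * (∏ j, Q (α j)) with hK
  have hterm : ∀ i : Fin (n+2),
      (-1:ℂ)^(i:ℕ) * zeta τ x (Fin.snoc β (α i)) * zeta τ x (fun j => α (i.succAbove j))
      = K * ((-1:ℂ)^(i:ℕ) * Matrix.det (Matrix.of (Fin.snoc B' (v i))) *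
          Matrix.det (Matrix.of (v ∘ i.succAbove))) := by
    intro i
    have hL1 : Function.Injective (Fin.snoc (β : Fin n → ℂ) (α i) : Fin (n+1) → ℂ) :=
      snoc_inj hβ' (fun a => hβα a i)
    have hL1μ : ∀ a j, (Fin.snoc (β : Fin n → ℂ) (α i) : Fin (n+1) → ℂ) a ≠ μ j := by
      intro a j
      induction a using Fin.lastCases with
      | last => simpa using hμα j i
      | cast a => simpa using hμβ j a
    have hL2 : Function.Injective (fun j : Fin (n+1) => α (i.succAbove j)) :=
      hα.comp (Fin.succAbove_right_injective)
    have hL2μ : ∀ a j, (fun j : Fin (n+1) => α (i.succAbove j)) a ≠ μ j :=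
      fun a j => hμα j _
    rw [key _ hL1 hL1μ, key _ hL2 hL2μ]
    have h1 : (∏ a : Fin (n+1), ∏ k, ((Fin.snoc (β : Fin n → ℂ) (α i) : Fin (n+1) → ℂ) a - μ k))
        = (∏ a : Fin n, Q (β a)) * Q (α i) := by
      rw [Fin.prod_univ_castSucc]
      simp [hQ]
    have h3 : Q (α i) * ∏ a : Fin (n+1), Q (α (i.succAbove a)) = ∏ j, Q (α j) :=
      (Fin.prod_univ_succAbove (fun j => Q (α j)) i).symm
    have hm1 : (Matrix.of fun a b => r ((Fin.snoc (β : Fin n → ℂ) (α i) : Fin (n+1) → ℂ) a) b)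
        = Matrix.of (Fin.snoc B' (v i)) := by
      ext a b
      induction a using Fin.lastCases with
      | last => simp [hB', hv]
      | cast a => simp [hB', hv]
    have hm2 : (Matrix.of fun a b => r ((fun j : Fin (n+1) => α (i.succAbove j)) a) b)
        = Matrix.of (v ∘ i.succAbove) := rfl
    have h2 : (∏ a : Fin (n+1), ∏ k, ((fun j : Fin (n+1) => α (i.succAbove j)) a - μ k))
        = ∏ a : Fin (n+1), Q (α (i.succAbove a)) := rfl
    rw [h1, hm1, hm2, h2, hK, ← h3]
    ring
  calc ∑ i : Fin (n+2), (-1:ℂ)^(i:ℕ) * zeta τ x (Fin.snoc β (α i)) *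
        zeta τ x (fun j => α (i.succAbove j))
      = ∑ i : Fin (n+2), K * ((-1:ℂ)^(i:ℕ) * Matrix.det (Matrix.of (Fin.snoc B' (v i))) *
          Matrix.det (Matrix.of (v ∘ i.succAbove))) :=
        Finset.sum_congr rfl fun i _ => hterm i
    _ = K * ∑ i : Fin (n+2), ((-1:ℂ)^(i:ℕ) * Matrix.det (Matrix.of (Fin.snoc B' (v i))) *
          Matrix.det (Matrix.of (v ∘ i.succAbove))) := (Finset.mul_sum _ _ _).symm
    _ = 0 := by rw [pluecker B' v, mul_zero]

end
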